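/- With P as above and M* a maximum matching of G, let D-to-N count edges of M* joining a connection vertex of a component of (V,P) to an isolated vertex, D-to-D count edges of M* joining connection vertices of two distinct components, S-S count edges of M* whose two endpoints lie in isolated-edge components, D-S count edges of M* joining a vertex of an isolated edge to a connection vertex of another component, and D-mid count edges of M* incident to the middle vertex of a length-2-path component or contained inside a triangle component. Then D-to-N + D-to-D + S-S + D-S + D-mid ≥ |M*|. -/
import Mathlib


variable {V : Type*} [Fintype V] [DecidableEq V]

/-- A matching of `G`: a finite set of edges of `G` that are pairwise vertex-disjoint. -/
def IsMatching (G : SimpleGraph V) (M : Finset (Sym2 V)) : Prop :=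
  (∀ e ∈ M, e ∈ G.edgeSet) ∧
    ∀ e ∈ M, ∀ f ∈ M, e ≠ f → ∀ v : V, v ∈ e → v ∉ f

/-- A connected component of `H` is a triangle. -/
def IsTriangleComp (H : SimpleGraph V) (c : H.ConnectedComponent) : Prop :=
  c.supp.ncard = 3 ∧ ∀ x ∈ c.supp, ∀ y ∈ c.supp, x ≠ y → H.Adj x y

/-- `x` is an isolated vertex of `H`. -/
def IsIsoVert (H : SimpleGraph V) (x : V) : Prop :=
  (H.connectedComponentMk x).supp.ncard = 1

/-- `x` belongs to an isolated-edge component of `H`. -/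
def InIsoEdge (H : SimpleGraph V) (x : V) : Prop :=
  (H.connectedComponentMk x).supp.ncard = 2

/-- `x` is a connection vertex: it lies in a 3-vertex component and is either an
endpoint of a length-2 path (degree 1) or a vertex of a triangle component. -/
def IsConnVert (H : SimpleGraph V) (x : V) : Prop :=
  (H.connectedComponentMk x).supp.ncard = 3 ∧
    ((∀ y z : V, H.Adj x y → H.Adj x z → y = z) ∨
      IsTriangleComp H (H.connectedComponentMk x))

/-- `x` is the middle vertex of a length-2-path component of `H`. -/
def IsMidVert (H : SimpleGraph V) (x : V) : Prop :=
  (H.connectedComponentMk x).supp.ncard = 3 ∧ ¬ IsConnVert H x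

/-- Category D-to-N: joins a connection vertex to an isolated vertex. -/
def CatDN (H : SimpleGraph V) (e : Sym2 V) : Prop :=
  ∃ u v : V, e = s(u, v) ∧ IsConnVert H u ∧ IsIsoVert H v

/-- Category D-to-D: joins connection vertices of two distinct components. -/
def CatDD (H : SimpleGraph V) (e : Sym2 V) : Prop :=
  ∃ u v : V, e = s(u, v) ∧ IsConnVert H u ∧ IsConnVert H v ∧
    H.connectedComponentMk u ≠ H.connectedComponentMk v

/-- Category S-S: both endpoints lie in isolated-edge components. -/
def CatSS (H : SimpleGraph V) (e : Sym2 V) : Prop :=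
  ∃ u v : V, e = s(u, v) ∧ InIsoEdge H u ∧ InIsoEdge H v

/-- Category D-S: joins a vertex of an isolated edge to a connection vertex. -/
def CatDS (H : SimpleGraph V) (e : Sym2 V) : Prop :=
  ∃ u v : V, e = s(u, v) ∧ InIsoEdge H u ∧ IsConnVert H v

/-- Category D-mid: incident to the middle vertex of a length-2-path component, or
contained inside a triangle component. -/
def CatDM (H : SimpleGraph V) (e : Sym2 V) : Prop :=
  (∃ u v : V, e = s(u, v) ∧ IsMidVert H u) ∨
    (∃ u v : V, e = s(u, v) ∧ H.connectedComponentMk u = H.connectedComponentMk v ∧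
      IsTriangleComp H (H.connectedComponentMk u))

open SimpleGraph in
private lemma reach_sup_edge {H : SimpleGraph V} {u v a b : V}
    (h : (H ⊔ SimpleGraph.fromEdgeSet {s(u,v)}).Reachable a b) :
    H.Reachable a b ∨ (H.Reachable a u ∧ H.Reachable v b) ∨
      (H.Reachable a v ∧ H.Reachable u b) := by
  obtain ⟨w⟩ := h
  induction w with
  | nil => exact Or.inl (Reachable.refl _)
  | @cons x y z hxy p ih =>
    rcases hxy with hH | hE
    · rcases ih with h1 | ⟨h1, h2⟩ | ⟨h1, h2⟩
      · exact Or.inl (hH.reachable.trans h1)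
      · exact Or.inr (Or.inl ⟨hH.reachable.trans h1, h2⟩)
      · exact Or.inr (Or.inr ⟨hH.reachable.trans h1, h2⟩)
    · rw [SimpleGraph.fromEdgeSet_adj] at hE
      obtain ⟨hmem, hne⟩ := hE
      simp only [Set.mem_singleton_iff, Sym2.eq, Sym2.rel_iff', Prod.mk.injEq,
        Prod.swap_prod_mk] at hmem
      rcases hmem with ⟨rfl, rfl⟩ | ⟨rfl, rfl⟩
      · rcases ih with h1 | ⟨h1, h2⟩ | ⟨h1, h2⟩
        · exact Or.inr (Or.inl ⟨Reachable.refl _, h1⟩)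
        · exact Or.inl (h1.symm.trans h2)
        · exact Or.inl h2
      · rcases ih with h1 | ⟨h1, h2⟩ | ⟨h1, h2⟩
        · exact Or.inr (Or.inr ⟨Reachable.refl _, h1⟩)
        · exact Or.inl h2
        · exact Or.inl (h1.symm.trans h2)

open SimpleGraph in
private lemma no_big_comp {H : SimpleGraph V}
    (hcomp : ∀ c : H.ConnectedComponent, c.supp.ncard ≤ 3) {u v : V}
    (hsz : (H.connectedComponentMk u).supp.ncard + (H.connectedComponentMk v).supp.ncard ≤ 3
      ∨ H.connectedComponentMk u = H.connectedComponentMk v)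
    (c : (H ⊔ SimpleGraph.fromEdgeSet {s(u,v)}).ConnectedComponent) :
    c.supp.ncard ≤ 3 := by
  obtain ⟨x, rfl⟩ := c.exists_rep
  have hmem : ∀ y, y ∈ ((H ⊔ SimpleGraph.fromEdgeSet {s(u,v)}).connectedComponentMk x).supp →
      (H ⊔ SimpleGraph.fromEdgeSet {s(u,v)}).Reachable y x := by
    intro y hy
    rw [ConnectedComponent.mem_supp_iff] at hy
    exact ConnectedComponent.exact hy
  rcases hsz with hsum | heq
  · by_cases hx : H.Reachable x u ∨ H.Reachable x v
    · have hsub : ((H ⊔ SimpleGraph.fromEdgeSet {s(u,v)}).connectedComponentMk x).supp ⊆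
          (H.connectedComponentMk u).supp ∪ (H.connectedComponentMk v).supp := by
        intro y hy
        rcases reach_sup_edge (hmem y hy) with h1 | ⟨h1, _⟩ | ⟨h1, _⟩
        · rcases hx with hxu | hxv
          · exact Or.inl (by rw [ConnectedComponent.mem_supp_iff]
                             exact ConnectedComponent.sound (h1.trans hxu))
          · exact Or.inr (by rw [ConnectedComponent.mem_supp_iff]
                             exact ConnectedComponent.sound (h1.trans hxv))
        · exact Or.inl (by rw [ConnectedComponent.mem_supp_iff]
                           exact ConnectedComponent.sound h1)
        · exact Or.inr (by rw [ConnectedComponent.mem_supp_iff]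
                           exact ConnectedComponent.sound h1)
      calc _ ≤ ((H.connectedComponentMk u).supp ∪ (H.connectedComponentMk v).supp).ncard :=
            Set.ncard_le_ncard hsub (Set.toFinite _)
        _ ≤ _ := Set.ncard_union_le _ _
        _ ≤ 3 := hsum
    · push_neg at hx
      have hsub : ((H ⊔ SimpleGraph.fromEdgeSet {s(u,v)}).connectedComponentMk x).supp ⊆
          (H.connectedComponentMk x).supp := by
        intro y hy
        rcases reach_sup_edge (hmem y hy) with h1 | ⟨_, h2⟩ | ⟨_, h2⟩
        · rw [ConnectedComponent.mem_supp_iff]; exact ConnectedComponent.sound h1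
        · exact absurd h2.symm hx.2
        · exact absurd h2.symm hx.1
      exact le_trans (Set.ncard_le_ncard hsub (Set.toFinite _)) (hcomp _)
  · have huv : H.Reachable u v := ConnectedComponent.exact heq
    have hsub : ((H ⊔ SimpleGraph.fromEdgeSet {s(u,v)}).connectedComponentMk x).supp ⊆
        (H.connectedComponentMk x).supp := by
      intro y hy
      rcases reach_sup_edge (hmem y hy) with h1 | ⟨h1, h2⟩ | ⟨h1, h2⟩
      · rw [ConnectedComponent.mem_supp_iff]; exact ConnectedComponent.sound h1
      · rw [ConnectedComponent.mem_supp_iff]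
        exact ConnectedComponent.sound ((h1.trans huv).trans h2)
      · rw [ConnectedComponent.mem_supp_iff]
        exact ConnectedComponent.sound ((h1.trans huv.symm).trans h2)
    exact le_trans (Set.ncard_le_ncard hsub (Set.toFinite _)) (hcomp _)

open SimpleGraph in
private lemma supp_pos (H : SimpleGraph V) (x : V) :
    1 ≤ (H.connectedComponentMk x).supp.ncard := by
  have : x ∈ (H.connectedComponentMk x).supp := by
    rw [ConnectedComponent.mem_supp_iff]
  exact (Set.ncard_pos (Set.toFinite _)).mpr ⟨x, this⟩

open SimpleGraph in
private lemma adj_two_le {H : SimpleGraph V} {u v : V} (h : H.Adj u v) :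
    2 ≤ (H.connectedComponentMk u).supp.ncard := by
  have hsub : {u, v} ⊆ (H.connectedComponentMk u).supp := by
    intro y hy
    rcases hy with rfl | hy
    · rw [ConnectedComponent.mem_supp_iff]
    · rw [Set.mem_singleton_iff] at hy; subst hy
      rw [ConnectedComponent.mem_supp_iff]
      exact ConnectedComponent.sound h.symm.reachable
  calc 2 = ({u, v} : Set V).ncard := (Set.ncard_pair h.ne).symm
    _ ≤ _ := Set.ncard_le_ncard hsub (Set.toFinite _)

open SimpleGraph in
private lemma classify_aux (G H : SimpleGraph V)
    (hcomp : ∀ c : H.ConnectedComponent, c.supp.ncard ≤ 3)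
    (hmax : ∀ u v : V, G.Adj u v → ¬ H.Adj u v →
      ∃ c : (H ⊔ SimpleGraph.fromEdgeSet {s(u, v)}).ConnectedComponent,
        3 < c.supp.ncard)
    {u v : V} (huv : G.Adj u v)
    (hba : (H.connectedComponentMk v).supp.ncard ≤ (H.connectedComponentMk u).supp.ncard) :
    CatDN H s(u,v) ∨ CatDD H s(u,v) ∨ CatSS H s(u,v) ∨ CatDS H s(u,v) ∨ CatDM H s(u,v) := by
  have hnadj_of : (H.connectedComponentMk u).supp.ncard +
      (H.connectedComponentMk v).supp.ncard ≤ 3 → False := by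
    intro hsum
    have hnadj : ¬ H.Adj u v := by
      intro hadj
      have h2 := adj_two_le hadj
      have h2' := adj_two_le hadj.symm
      omega
    obtain ⟨c, hc⟩ := hmax u v huv hnadj
    exact absurd (no_big_comp hcomp (Or.inl hsum) c) (by omega)
  have hau := supp_pos H u
  have hav := supp_pos H v
  have hbu := hcomp (H.connectedComponentMk u)
  have hbv := hcomp (H.connectedComponentMk v)
  have htri3 : (H.connectedComponentMk u).supp.ncard = 1 ∨
      (H.connectedComponentMk u).supp.ncard = 2 ∨
      (H.connectedComponentMk u).supp.ncard = 3 := by omega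
  have htri3' : (H.connectedComponentMk v).supp.ncard = 1 ∨
      (H.connectedComponentMk v).supp.ncard = 2 ∨
      (H.connectedComponentMk v).supp.ncard = 3 := by omega
  rcases htri3 with hA | hA | hA
  · -- a = 1, so b = 1
    exact (hnadj_of (by omega)).elim
  · -- a = 2, b ∈ {1,2}
    rcases htri3' with hB | hB | hB
    · exact (hnadj_of (by omega)).elim
    · exact Or.inr (Or.inr (Or.inl ⟨u, v, rfl, hA, hB⟩))
    · omega
  · -- a = 3
    by_cases hcu : IsConnVert H u
    case neg =>
      exact Or.inr (Or.inr (Or.inr (Or.inr (Or.inl ⟨u, v, rfl, hA, hcu⟩))))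
    rcases htri3' with hB | hB | hB
    · exact Or.inl ⟨u, v, rfl, hcu, hB⟩
    · refine Or.inr (Or.inr (Or.inr (Or.inl ?_)))
      rw [Sym2.eq_swap]
      exact ⟨v, u, rfl, hB, hcu⟩
    · by_cases hcv : IsConnVert H v
      case neg =>
        refine Or.inr (Or.inr (Or.inr (Or.inr (Or.inl ?_))))
        rw [Sym2.eq_swap]
        exact ⟨v, u, rfl, hB, hcv⟩
      by_cases hcc : H.connectedComponentMk u = H.connectedComponentMk v
      case neg =>
        exact Or.inr (Or.inl ⟨u, v, rfl, hcu, hcv, hcc⟩)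
      by_cases htri : IsTriangleComp H (H.connectedComponentMk u)
      · exact Or.inr (Or.inr (Or.inr (Or.inr (Or.inr ⟨u, v, rfl, hcc, htri⟩))))
      · -- path component: u, v endpoints, not adjacent in H
        exfalso
        have hdu : ∀ y z : V, H.Adj u y → H.Adj u z → y = z := hcu.2.resolve_right htri
        have hdv : ∀ y z : V, H.Adj v y → H.Adj v z → y = z := by
          refine hcv.2.resolve_right ?_
          rwa [← hcc]
        have hnadj : ¬ H.Adj u v := by
          intro hadj
          -- third vertex w
          have hne : u ≠ v := hadj.ne
          have hsubuv : ({u, v} : Set V) ⊆ (H.connectedComponentMk u).supp := by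
            intro y hy
            rcases hy with rfl | hy
            · rw [ConnectedComponent.mem_supp_iff]
            · rw [Set.mem_singleton_iff] at hy; subst hy
              rw [ConnectedComponent.mem_supp_iff]; exact hcc.symm
          obtain ⟨w, hw, hwuv⟩ : ∃ w ∈ (H.connectedComponentMk u).supp, w ∉ ({u, v} : Set V) := by
            by_contra hno
            push_neg at hno
            have := Set.ncard_le_ncard hno (Set.toFinite _)
            rw [Set.ncard_pair hne] at this
            omega
          simp only [Set.mem_insert_iff, Set.mem_singleton_iff, not_or] at hwuv
          -- supp = {u, v, w}
          have hsupp : (H.connectedComponentMk u).supp = {u, v, w} := by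
            refine (Set.eq_of_subset_of_ncard_le ?_ ?_ (Set.toFinite _)).symm
            · intro y hy
              rcases hy with rfl | rfl | hy
              · rw [ConnectedComponent.mem_supp_iff]
              · rw [ConnectedComponent.mem_supp_iff]; exact hcc.symm
              · rw [Set.mem_singleton_iff] at hy; subst hy; exact hw
            · have hvw : ({v, w} : Set V).ncard = 2 :=
                Set.ncard_pair (fun h => hwuv.2 h.symm)
              have hnu : u ∉ ({v, w} : Set V) := by
                simp only [Set.mem_insert_iff, Set.mem_singleton_iff]
                push_neg
                exact ⟨hne, fun h => hwuv.1 h.symm⟩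
              have huvw : ({u, v, w} : Set V).ncard = 3 := by
                rw [Set.ncard_insert_of_notMem hnu (Set.toFinite _), hvw]
              rw [hA, huvw]
          -- w reaches u; first step of walk gives neighbor of w inside supp
          have hreach : H.Reachable w u := by
            rw [ConnectedComponent.mem_supp_iff] at hw
            exact ConnectedComponent.exact hw
          obtain ⟨p⟩ := hreach
          cases p with
          | nil => exact hwuv.1 rfl
          | @cons _ c _ hwc p' =>
            have hcsupp : c ∈ (H.connectedComponentMk u).supp := by
              rw [ConnectedComponent.mem_supp_iff]
              exact ConnectedComponent.sound ⟨p'⟩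
            rw [hsupp] at hcsupp
            simp only [Set.mem_insert_iff, Set.mem_singleton_iff] at hcsupp
            rcases hcsupp with rfl | rfl | rfl
            · exact hwuv.2 (hdu v w hadj hwc.symm).symm
            · exact hwuv.1 (hdv u w hadj.symm hwc.symm).symm
            · exact hwc.ne rfl
        obtain ⟨c, hc⟩ := hmax u v huv hnadj
        exact absurd (no_big_comp hcomp (Or.inr hcc) c) (by omega)

open SimpleGraph in
private lemma classify (G H : SimpleGraph V)
    (hcomp : ∀ c : H.ConnectedComponent, c.supp.ncard ≤ 3)
    (hmax : ∀ u v : V, G.Adj u v → ¬ H.Adj u v →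
      ∃ c : (H ⊔ SimpleGraph.fromEdgeSet {s(u, v)}).ConnectedComponent,
        3 < c.supp.ncard)
    {u v : V} (huv : G.Adj u v) :
    CatDN H s(u,v) ∨ CatDD H s(u,v) ∨ CatSS H s(u,v) ∨ CatDS H s(u,v) ∨ CatDM H s(u,v) := by
  rcases le_total ((H.connectedComponentMk v).supp.ncard)
      ((H.connectedComponentMk u).supp.ncard) with h | h
  · exact classify_aux G H hcomp hmax huv h
  · rw [Sym2.eq_swap]
    exact classify_aux G H hcomp hmax huv.symm h

/-- Every edge of the maximum matching `M*` falls into one of the five categories,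
hence `D-to-N + D-to-D + S-S + D-S + D-mid ≥ |M*|`. -/
theorem five_categories_cover (G H : SimpleGraph V) (hle : H ≤ G)
    (hcomp : ∀ c : H.ConnectedComponent, c.supp.ncard ≤ 3)
    (hmax : ∀ u v : V, G.Adj u v → ¬ H.Adj u v →
      ∃ c : (H ⊔ SimpleGraph.fromEdgeSet {s(u, v)}).ConnectedComponent,
        3 < c.supp.ncard)
    (Mstar : Finset (Sym2 V)) (hMstar : IsMatching G Mstar)
    (hMstarMax : ∀ N : Finset (Sym2 V), IsMatching G N → N.card ≤ Mstar.card) :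
    Mstar.card ≤
      {e ∈ (Mstar : Set (Sym2 V)) | CatDN H e}.ncard +
      {e ∈ (Mstar : Set (Sym2 V)) | CatDD H e}.ncard +
      {e ∈ (Mstar : Set (Sym2 V)) | CatSS H e}.ncard +
      {e ∈ (Mstar : Set (Sym2 V)) | CatDS H e}.ncard +
      {e ∈ (Mstar : Set (Sym2 V)) | CatDM H e}.ncard := by
  classical
  have hcover : ∀ e ∈ Mstar, CatDN H e ∨ CatDD H e ∨ CatSS H e ∨ CatDS H e ∨ CatDM H e := by
    intro e he
    have hG : e ∈ G.edgeSet := hMstar.1 e he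
    induction e with
    | h u v =>
      rw [SimpleGraph.mem_edgeSet] at hG
      exact classify G H hcomp hmax hG
  set A := {e ∈ (Mstar : Set (Sym2 V)) | CatDN H e}
  set B := {e ∈ (Mstar : Set (Sym2 V)) | CatDD H e}
  set C := {e ∈ (Mstar : Set (Sym2 V)) | CatSS H e}
  set D := {e ∈ (Mstar : Set (Sym2 V)) | CatDS H e}
  set E := {e ∈ (Mstar : Set (Sym2 V)) | CatDM H e}
  have hsub : (Mstar : Set (Sym2 V)) ⊆ A ∪ B ∪ C ∪ D ∪ E := by
    intro e he
    have he' : e ∈ Mstar := he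
    rcases hcover e he' with h | h | h | h | h
    · exact Or.inl (Or.inl (Or.inl (Or.inl ⟨he, h⟩)))
    · exact Or.inl (Or.inl (Or.inl (Or.inr ⟨he, h⟩)))
    · exact Or.inl (Or.inl (Or.inr ⟨he, h⟩))
    · exact Or.inl (Or.inr ⟨he, h⟩)
    · exact Or.inr ⟨he, h⟩
  calc Mstar.card = (Mstar : Set (Sym2 V)).ncard := (Set.ncard_coe_finset _).symm
    _ ≤ (A ∪ B ∪ C ∪ D ∪ E).ncard := Set.ncard_le_ncard hsub (Set.toFinite _)
    _ ≤ (A ∪ B ∪ C ∪ D).ncard + E.ncard := Set.ncard_union_le _ _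
    _ ≤ ((A ∪ B ∪ C).ncard + D.ncard) + E.ncard :=
        Nat.add_le_add_right (Set.ncard_union_le _ _) _
    _ ≤ (((A ∪ B).ncard + C.ncard) + D.ncard) + E.ncard :=
        Nat.add_le_add_right (Nat.add_le_add_right (Set.ncard_union_le _ _) _) _
    _ ≤ (((A.ncard + B.ncard) + C.ncard) + D.ncard) + E.ncard :=
        Nat.add_le_add_right (Nat.add_le_add_right (Nat.add_le_add_right (Set.ncard_union_le _ _) _) _) _
    _ = A.ncard + B.ncard + C.ncard + D.ncard + E.ncard := rfl
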